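/- Let n ≥ 1 and let H₀ be the matrix indexed by ℤ/(2n+1) with entries (H₀)_{ij} = δ_{ij} + (1/2)(δ_{i,j+1} + δ_{i,j−1}) (indices mod 2n+1). Then the smallest eigenvalue 1 + cos(2πn/(2n+1)) of H₀ has multiplicity at least 2 (both p_n and p_{−n} are eigenvectors for it), so the spectral gap of H₀ between its two smallest eigenvalues is zero; yet, with ψ = p_n, for every subset S ⊆ ℤ/(2n+1) with 0 < |S| ≤ n the conductance ratio satisfies (−⟨ψ| 1_S H₀ 1_{S^c} |ψ⟩)/π(S) ≥ |cos(2πn/(2n+1))|/n. -/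

import Mathlib

open scoped BigOperators
open Fin.NatCast

/-- The hopping Hamiltonian of a single particle on a ring with `2n+1` sites:
`(H₀)_{ij} = δ_{ij} + (1/2)(δ_{i,j+1} + δ_{i,j-1})`, indices mod `2n+1`. -/
noncomputable def ringH (n : ℕ) : Matrix (ZMod (2 * n + 1)) (ZMod (2 * n + 1)) ℂ :=
  fun i j => (if i = j then 1 else 0) +
    (1 / 2) * ((if i = j + 1 then 1 else 0) + (if i = j - 1 then 1 else 0))

/-- The momentum eigenstate `p_k`, with components
`(p_k)_j = exp(2πi·jk/(2n+1))/√(2n+1)`. -/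
noncomputable def pvec (n : ℕ) (k : ℤ) : ZMod (2 * n + 1) → ℂ :=
  fun j => Complex.exp (2 * Real.pi * Complex.I * (j.val : ℂ) * (k : ℂ) / (2 * n + 1)) /
    (Real.sqrt (2 * n + 1) : ℂ)

namespace Stmt18

noncomputable def ee (n : ℕ) (m : ℤ) : ℂ :=
  Complex.exp (2 * Real.pi * Complex.I * m / (2 * n + 1))

lemma Ncpos (n : ℕ) : (0:ℝ) < (2*n+1 : ℝ) := by positivity

lemma Ncne (n : ℕ) : ((2*n+1 : ℕ) : ℂ) ≠ 0 :=
  Nat.cast_ne_zero.2 (by omega)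

lemma ee_eq (n : ℕ) (m : ℤ) :
    ee n m = Complex.exp (((2 * Real.pi * m / (2*n+1) : ℝ) : ℂ) * Complex.I) := by
  unfold ee; congr 1; push_cast; ring

lemma ee_add (n : ℕ) (a b : ℤ) : ee n (a + b) = ee n a * ee n b := by
  unfold ee; rw [← Complex.exp_add]; congr 1; push_cast; ring

lemma ee_eq_one_iff (n : ℕ) (m : ℤ) : ee n m = 1 ↔ ((2*n+1 : ℕ) : ℤ) ∣ m := by
  unfold ee
  rw [Complex.exp_eq_one_iff]
  constructor
  · rintro ⟨t, ht⟩
    refine ⟨t, ?_⟩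
    have hN : ((2*(n:ℂ)+1)) ≠ 0 := by
      have := Ncne n; push_cast at this ⊢; exact_mod_cast this
    have hI : (2 * (Real.pi:ℂ) * Complex.I) ≠ 0 := by
      simp [Real.pi_ne_zero, Complex.I_ne_zero]
    field_simp at ht
    have h2 : (m : ℂ) = t * (2*(n:ℂ)+1) := by
      apply mul_left_cancel₀ hI
      push_cast at ht ⊢
      ring_nf at ht ⊢
      linear_combination (2 * (Real.pi:ℂ) * Complex.I) * ht
    have h3 : (m : ℂ) = ((((2*n+1:ℕ):ℤ) * t : ℤ) : ℂ) := by push_cast; linear_combination h2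
    exact_mod_cast h3
  · rintro ⟨t, ht⟩
    refine ⟨t, ?_⟩
    subst ht
    have hN : ((2*(n:ℂ)+1)) ≠ 0 := by
      have := Ncne n; push_cast at this ⊢; exact_mod_cast this
    field_simp
    push_cast
    ring

lemma ee_congr (n : ℕ) {a b : ℤ} (h : (a : ZMod (2*n+1)) = (b : ZMod (2*n+1))) :
    ee n a = ee n b := by
  have hd : ((2*n+1 : ℕ) : ℤ) ∣ (a - b) := by
    rwa [← ZMod.intCast_zmod_eq_zero_iff_dvd, Int.cast_sub, sub_eq_zero]
  have h1 : ee n (a - b) = 1 := (ee_eq_one_iff n _).2 hd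
  calc ee n a = ee n (b + (a - b)) := by ring_nf
    _ = ee n b * ee n (a - b) := ee_add n b (a-b)
    _ = ee n b := by rw [h1, mul_one]

lemma ee_conj (n : ℕ) (m : ℤ) : (starRingEnd ℂ) (ee n m) = ee n (-m) := by
  rw [ee_eq, ee_eq, ← Complex.exp_conj]
  simp only [map_mul, map_div₀, Complex.conj_I, Complex.conj_ofReal, map_intCast,
    map_ofNat, map_add, map_one, map_natCast]
  congr 1
  push_cast
  ring

lemma ee_norm (n : ℕ) (m : ℤ) : ‖ee n m‖ = 1 := by
  rw [ee_eq]; exact Complex.norm_exp_ofReal_mul_I _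

lemma ee_zero (n : ℕ) : ee n 0 = 1 := by
  unfold ee; simp

lemma two_cos (n : ℕ) (m : ℤ) :
    ee n m + ee n (-m) = 2 * ((Real.cos (2 * Real.pi * m / (2*n+1)) : ℝ) : ℂ) := by
  rw [ee_eq, ee_eq]
  rw [Complex.ofReal_cos]
  rw [Complex.cos]
  push_cast
  ring_nf

lemma pvec_apply (n : ℕ) (k : ℤ) (j : ZMod (2*n+1)) :
    pvec n k j = ee n (j.val * k) / (Real.sqrt (2*n+1) : ℂ) := by
  unfold pvec ee
  congr 2
  push_cast
  ring


lemma val_cast_self (n : ℕ) (j : ZMod (2*n+1)) : ((j.val : ℤ) : ZMod (2*n+1)) = j := by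
  rw [Int.cast_natCast, ZMod.natCast_val, ZMod.cast_id]

lemma pvec_succ (n : ℕ) (k : ℤ) (i : ZMod (2*n+1)) :
    pvec n k (i + 1) = ee n k * pvec n k i := by
  rw [pvec_apply, pvec_apply]
  have h : ee n (((i+1).val : ℤ) * k) = ee n k * ee n ((i.val : ℤ) * k) := by
    rw [← ee_add]
    apply ee_congr
    push_cast [ZMod.natCast_val, ZMod.cast_id]
    ring
  rw [h, mul_div_assoc]

lemma pvec_pred (n : ℕ) (k : ℤ) (i : ZMod (2*n+1)) :
    pvec n k (i - 1) = ee n (-k) * pvec n k i := by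
  rw [pvec_apply, pvec_apply]
  have h : ee n (((i-1).val : ℤ) * k) = ee n (-k) * ee n ((i.val : ℤ) * k) := by
    rw [← ee_add]
    apply ee_congr
    push_cast [ZMod.natCast_val, ZMod.cast_id]
    ring
  rw [h, mul_div_assoc]

lemma mulVec_pvec (n : ℕ) (k : ℤ) :
    (ringH n).mulVec (pvec n k) =
      ((1 + Real.cos (2 * Real.pi * (k : ℝ) / (2 * n + 1)) : ℝ) : ℂ) • pvec n k := by
  funext i
  have key : ∀ j, ringH n i j = (if j = i then (1:ℂ) else 0) +
      (1/2) * ((if j = i - 1 then 1 else 0) + (if j = i + 1 then 1 else 0)) := by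
    intro j
    unfold ringH
    have h1 : (i = j) ↔ (j = i) := eq_comm
    have h2 : (i = j + 1) ↔ (j = i - 1) := by
      constructor <;> intro h <;> subst h <;> ring
    have h3 : (i = j - 1) ↔ (j = i + 1) := by
      constructor <;> intro h <;> subst h <;> ring
    rw [if_congr h1 rfl rfl, if_congr h2 rfl rfl, if_congr h3 rfl rfl]
  simp only [Matrix.mulVec, dotProduct, key, add_mul, mul_assoc, ite_mul, one_mul,
    zero_mul, Finset.sum_add_distrib, Finset.sum_ite_eq', Finset.mem_univ, if_true,
    ← Finset.mul_sum]
  rw [pvec_pred, pvec_succ, Pi.smul_apply, smul_eq_mul]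
  have hc := two_cos n k
  push_cast at hc ⊢
  ring_nf at hc ⊢
  linear_combination (pvec n k i) * (1/2) * hc


lemma exists_succ_not_mem (n : ℕ) (S : Finset (ZMod (2*n+1))) (hne : S.Nonempty)
    (hproper : S ≠ Finset.univ) : ∃ x ∈ S, x + 1 ∉ S := by
  by_contra h
  push_neg at h
  obtain ⟨a, ha⟩ := hne
  have key : ∀ m : ℕ, a + (m : ZMod (2*n+1)) ∈ S := by
    intro m
    induction m with
    | zero => simpa using ha
    | succ m ih =>
        have h2 := h _ ih
        have h3 : a + (m:ZMod (2*n+1)) + 1 = a + ((m+1 : ℕ) : ZMod (2*n+1)) := by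
          push_cast; ring
        rwa [h3] at h2
  apply hproper
  apply Finset.eq_univ_of_forall
  intro y
  have h4 := key (y - a).val
  rw [ZMod.natCast_val, ZMod.cast_id] at h4
  have h5 : a + (y - a) = y := by ring
  rwa [h5] at h4

lemma exists_pred_not_mem (n : ℕ) (S : Finset (ZMod (2*n+1))) (hne : S.Nonempty)
    (hproper : S ≠ Finset.univ) : ∃ x ∈ S, x - 1 ∉ S := by
  classical
  set T : Finset (ZMod (2*n+1)) := S.image (fun x => -x) with hT
  have hmem : ∀ z, -z ∈ T ↔ z ∈ S := by
    intro z
    simp only [hT, Finset.mem_image]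
    constructor
    · rintro ⟨a, ha, haz⟩
      have : a = z := by linear_combination -haz
      rwa [this] at ha
    · intro hz; exact ⟨z, hz, rfl⟩
  obtain ⟨y, hy, hy1⟩ := exists_succ_not_mem n T (hne.image _) (by
    intro hTu
    apply hproper
    apply Finset.eq_univ_of_forall
    intro z
    have : -z ∈ T := hTu ▸ Finset.mem_univ _
    exact (hmem z).1 this)
  obtain ⟨x, hx, hxy⟩ := Finset.mem_image.1 hy
  refine ⟨x, hx, ?_⟩
  intro hc
  apply hy1
  have : y + 1 = -(x - 1) := by rw [← hxy]; ring
  rw [this]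
  exact (hmem _).2 hc

lemma conj_mul_self (n : ℕ) (k : ℤ) (x : ZMod (2*n+1)) :
    (starRingEnd ℂ) (pvec n k x) * pvec n k x = 1 / ((2*n+1:ℕ) : ℂ) := by
  rw [pvec_apply, map_div₀, ee_conj, Complex.conj_ofReal, div_mul_div_comm, ← ee_add,
    neg_add_cancel, ee_zero]
  congr 1
  have : (Real.sqrt (2*n+1) : ℝ) * Real.sqrt (2*n+1) = (2*n+1 : ℝ) :=
    Real.mul_self_sqrt (by positivity)
  push_cast
  rw [← Complex.ofReal_mul]
  rw [this]
  push_cast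
  ring

lemma conj_mul_succ (n : ℕ) (k : ℤ) (x : ZMod (2*n+1)) :
    (starRingEnd ℂ) (pvec n k x) * pvec n k (x+1) = ee n k / ((2*n+1:ℕ) : ℂ) := by
  rw [pvec_succ]
  calc (starRingEnd ℂ) (pvec n k x) * (ee n k * pvec n k x)
      = ee n k * ((starRingEnd ℂ) (pvec n k x) * pvec n k x) := by ring
    _ = ee n k * (1 / ((2*n+1:ℕ) : ℂ)) := by rw [conj_mul_self]
    _ = ee n k / ((2*n+1:ℕ) : ℂ) := by ring

lemma conj_mul_pred (n : ℕ) (k : ℤ) (x : ZMod (2*n+1)) :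
    (starRingEnd ℂ) (pvec n k x) * pvec n k (x-1) = ee n (-k) / ((2*n+1:ℕ) : ℂ) := by
  rw [pvec_pred]
  calc (starRingEnd ℂ) (pvec n k x) * (ee n (-k) * pvec n k x)
      = ee n (-k) * ((starRingEnd ℂ) (pvec n k x) * pvec n k x) := by ring
    _ = ee n (-k) * (1 / ((2*n+1:ℕ) : ℂ)) := by rw [conj_mul_self]
    _ = ee n (-k) / ((2*n+1:ℕ) : ℂ) := by ring

lemma ringH_apply (n : ℕ) (i j : ZMod (2*n+1)) :
    ringH n i j = (if j = i then (1:ℂ) else 0) +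
      (1/2) * ((if j = i - 1 then 1 else 0) + (if j = i + 1 then 1 else 0)) := by
  unfold ringH
  have h1 : (i = j) ↔ (j = i) := eq_comm
  have h2 : (i = j + 1) ↔ (j = i - 1) := by
    constructor <;> intro h <;> subst h <;> ring
  have h3 : (i = j - 1) ↔ (j = i + 1) := by
    constructor <;> intro h <;> subst h <;> ring
  rw [if_congr h1 rfl rfl, if_congr h2 rfl rfl, if_congr h3 rfl rfl]

lemma ee_div_re (n : ℕ) (m : ℤ) :
    (ee n m / ((2*n+1:ℕ) : ℂ)).re = Real.cos (2*Real.pi*m/(2*n+1)) / (2*n+1 : ℝ) := by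
  rw [ee_eq]
  have h1 : ((2*n+1:ℕ) : ℂ) = ((2*n+1 : ℝ) : ℂ) := by push_cast; ring
  rw [h1, div_eq_mul_inv, ← Complex.ofReal_inv, Complex.mul_re, Complex.ofReal_re,
    Complex.ofReal_im, Complex.exp_ofReal_mul_I_re, mul_zero, sub_zero]
  rw [div_eq_mul_inv, div_eq_mul_inv]


lemma cos_neg' (n : ℕ) (hn : 1 ≤ n) : Real.cos (2 * Real.pi * (n : ℝ) / (2 * n + 1)) < 0 := by
  set t : ℝ := 2 * Real.pi * (n:ℝ) / (2*n+1) with ht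
  have hpi := Real.pi_pos
  have hNpos : (0:ℝ) < 2*n+1 := by positivity
  have hn' : (1:ℝ) ≤ n := by exact_mod_cast hn
  apply Real.cos_neg_of_pi_div_two_lt_of_lt
  · rw [ht, lt_div_iff₀ hNpos]
    nlinarith
  · rw [ht, div_lt_iff₀ hNpos]
    nlinarith

lemma conductance (n : ℕ) (hn : 1 ≤ n) (S : Finset (ZMod (2*n+1)))
    (h0 : 0 < S.card) (h1 : S.card ≤ n) :
    |Real.cos (2 * Real.pi * (n : ℝ) / (2 * n + 1))| / n ≤
      (-(∑ x ∈ S, ∑ y ∈ Sᶜ, (starRingEnd ℂ) (pvec n n x) * ringH n x y * pvec n n y).re) /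
        (∑ z ∈ S, ‖pvec n n z‖ ^ 2) := by
  classical
  have hNpos : (0:ℝ) < 2*n+1 := by positivity
  -- denominator
  have hnorm : ∀ z : ZMod (2*n+1), ‖pvec n n z‖ ^ 2 = 1 / (2*n+1 : ℝ) := by
    intro z
    rw [pvec_apply, norm_div, ee_norm, Complex.norm_real, Real.norm_eq_abs,
      abs_of_nonneg (Real.sqrt_nonneg _)]
    rw [div_pow, one_pow, Real.sq_sqrt (by positivity)]
  have hD : (∑ z ∈ S, ‖pvec n n z‖ ^ 2) = (S.card : ℝ) / (2*n+1) := by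
    rw [Finset.sum_congr rfl (fun z _ => hnorm z), Finset.sum_const, nsmul_eq_mul]
    ring
  -- numerator
  have expand : ∀ x ∈ S, ∀ y ∈ Sᶜ,
      (starRingEnd ℂ) (pvec n n x) * ringH n x y * pvec n n y
      = (1/2) * ((if y = x - 1 then (starRingEnd ℂ) (pvec n n x) * pvec n n y else 0)
               + (if y = x + 1 then (starRingEnd ℂ) (pvec n n x) * pvec n n y else 0)) := by
    intro x hx y hy
    have hxy : y ≠ x := by
      intro h; rw [Finset.mem_compl] at hy; exact hy (h ▸ hx)
    rw [ringH_apply, if_neg hxy]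
    split_ifs <;> ring
  have hinner : ∀ x ∈ S,
      (∑ y ∈ Sᶜ, (starRingEnd ℂ) (pvec n n x) * ringH n x y * pvec n n y)
      = (1/2) * ((if x - 1 ∈ Sᶜ then ee n (-(n:ℤ)) / ((2*n+1:ℕ) : ℂ) else 0)
               + (if x + 1 ∈ Sᶜ then ee n (n:ℤ) / ((2*n+1:ℕ) : ℂ) else 0)) := by
    intro x hx
    rw [Finset.sum_congr rfl (fun y hy => expand x hx y hy)]
    rw [← Finset.mul_sum, Finset.sum_add_distrib, Finset.sum_ite_eq' Sᶜ (x-1),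
      Finset.sum_ite_eq' Sᶜ (x+1)]
    congr 2
    · split_ifs with h
      · exact conj_mul_pred n n x
      · rfl
    · split_ifs with h
      · exact conj_mul_succ n n x
      · rfl
  set Bm := (S.filter (fun x => x - 1 ∈ Sᶜ)).card with hBm
  set Bp := (S.filter (fun x => x + 1 ∈ Sᶜ)).card with hBp
  have hQ : (∑ x ∈ S, ∑ y ∈ Sᶜ, (starRingEnd ℂ) (pvec n n x) * ringH n x y * pvec n n y)
      = (1/2) * ((Bm : ℂ) * (ee n (-(n:ℤ)) / ((2*n+1:ℕ) : ℂ))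
               + (Bp : ℂ) * (ee n (n:ℤ) / ((2*n+1:ℕ) : ℂ))) := by
    rw [Finset.sum_congr rfl hinner, ← Finset.mul_sum, Finset.sum_add_distrib]
    rw [← Finset.sum_filter, ← Finset.sum_filter, Finset.sum_const, Finset.sum_const,
      nsmul_eq_mul, nsmul_eq_mul]
  -- real part
  have hcosneg : Real.cos (2*Real.pi*((-(n:ℤ)):ℝ)/(2*n+1)) =
      Real.cos (2*Real.pi*(n:ℝ)/(2*n+1)) := by
    push_cast
    rw [show 2*Real.pi*(-(n:ℝ))/(2*(n:ℝ)+1) = -(2*Real.pi*(n:ℝ)/(2*(n:ℝ)+1)) by ring,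
      Real.cos_neg]
  set c := Real.cos (2 * Real.pi * (n : ℝ) / (2 * n + 1)) with hcdef
  have hQre : (∑ x ∈ S, ∑ y ∈ Sᶜ, (starRingEnd ℂ) (pvec n n x) * ringH n x y * pvec n n y).re
      = ((Bm : ℝ) + (Bp : ℝ)) * c / (2*(2*n+1)) := by
    rw [hQ]
    rw [show (1/2:ℂ) = ((1/2:ℝ):ℂ) by norm_num,
      show ((Bm:ℕ):ℂ) = ((Bm:ℝ):ℂ) by push_cast; ring,
      show ((Bp:ℕ):ℂ) = ((Bp:ℝ):ℂ) by push_cast; ring]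
    simp only [Complex.re_ofReal_mul, Complex.add_re]
    rw [ee_div_re, ee_div_re]
    have harg1 : 2*Real.pi*(((-(n:ℤ)):ℤ):ℝ)/(2*(n:ℝ)+1) = -(2 * Real.pi * (n:ℝ) / (2 * n + 1)) := by
      push_cast; ring
    have harg2 : 2*Real.pi*(((n:ℕ):ℤ):ℝ)/(2*(n:ℝ)+1) = 2 * Real.pi * (n : ℝ) / (2 * n + 1) := by
      push_cast; ring
    rw [harg1, harg2, Real.cos_neg, ← hcdef]
    have hne : (2*(n:ℝ)+1) ≠ 0 := by positivity
    field_simp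
  -- boundary bounds
  haveI : NeZero (2*n+1) := ⟨by omega⟩
  have hSne : S.Nonempty := Finset.card_pos.1 h0
  have hproper : S ≠ Finset.univ := by
    intro h
    have hcard : S.card = 2*n+1 := by rw [h, Finset.card_univ, ZMod.card]
    omega
  have hBm1 : 1 ≤ Bm := by
    obtain ⟨x, hx, hx1⟩ := exists_pred_not_mem n S hSne hproper
    exact Finset.card_pos.2 ⟨x, Finset.mem_filter.2 ⟨hx, Finset.mem_compl.2 hx1⟩⟩
  have hBp1 : 1 ≤ Bp := by
    obtain ⟨x, hx, hx1⟩ := exists_succ_not_mem n S hSne hproper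
    exact Finset.card_pos.2 ⟨x, Finset.mem_filter.2 ⟨hx, Finset.mem_compl.2 hx1⟩⟩
  rw [hD, hQre, abs_of_neg (cos_neg' n hn)]
  have hcpos : 0 < -c := neg_pos.2 (cos_neg' n hn)
  have hSpos : (0:ℝ) < S.card := by exact_mod_cast h0
  have hnpos : (0:ℝ) < n := by
    have : (0:ℕ) < n := hn
    exact_mod_cast this
  have hrhs : (-(((Bm:ℝ)+(Bp:ℝ))*c/(2*(2*n+1)))) / ((S.card:ℝ)/(2*n+1))
      = ((Bm:ℝ)+(Bp:ℝ))*(-c)/(2*S.card) := by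
    have hx : (2*(n:ℝ)+1) ≠ 0 := by positivity
    have hy : (S.card:ℝ) ≠ 0 := by positivity
    field_simp
  rw [hrhs, div_le_div_iff₀ hnpos (by positivity)]
  have h2 : (S.card:ℝ) ≤ n := by exact_mod_cast h1
  have hBm' : (1:ℝ) ≤ Bm := by exact_mod_cast hBm1
  have hBp' : (1:ℝ) ≤ Bp := by exact_mod_cast hBp1
  have f1 : (-c)*(S.card:ℝ) ≤ (-c)*n := mul_le_mul_of_nonneg_left h2 hcpos.le
  have f2 : 2*((-c)*n) ≤ ((Bm:ℝ)+(Bp:ℝ))*((-c)*n) :=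
    mul_le_mul_of_nonneg_right (by linarith) (mul_nonneg hcpos.le hnpos.le)
  nlinarith [f1, f2]


lemma ee_nat_mul (n : ℕ) (j : ℕ) (m : ℤ) : ee n ((j:ℤ) * m) = ee n m ^ j := by
  unfold ee; rw [← Complex.exp_nat_mul]; congr 1; push_cast; ring

lemma sum_zmod_pow (n : ℕ) (ζ : ℂ) :
    ∑ j : ZMod (2*n+1), ζ ^ (j.val) = ∑ i ∈ Finset.range (2*n+1), ζ ^ i := by
  haveI : NeZero (2*n+1) := ⟨by omega⟩
  refine Finset.sum_nbij' (fun (j : ZMod (2*n+1)) => j.val) (fun i => (i : ZMod (2*n+1)))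
    ?_ ?_ ?_ ?_ ?_
  · intro a _; exact Finset.mem_range.2 (ZMod.val_lt a)
  · intro a _; exact Finset.mem_univ _
  · intro a _; rw [ZMod.natCast_val, ZMod.cast_id]
  · intro a ha; exact ZMod.val_cast_of_lt (Finset.mem_range.1 ha)
  · intro a _; rfl

lemma sum_ee_eq_zero (n : ℕ) {m : ℤ} (hm : ¬ ((2*n+1:ℕ):ℤ) ∣ m) :
    ∑ j : ZMod (2*n+1), ee n ((j.val : ℤ) * m) = 0 := by
  rw [Finset.sum_congr rfl (fun j _ => ee_nat_mul n j.val m), sum_zmod_pow]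
  have hζ : ee n m ≠ 1 := fun h => hm ((ee_eq_one_iff n m).1 h)
  rw [geom_sum_eq hζ]
  have hN : ee n m ^ (2*n+1) = 1 := by
    rw [← ee_nat_mul]
    exact (ee_eq_one_iff n _).2 ⟨m, by push_cast; ring⟩
  rw [hN, sub_self, zero_div]

lemma conj_pvec_mul (n : ℕ) (a b : ℤ) (j : ZMod (2*n+1)) :
    (starRingEnd ℂ) (pvec n a j) * pvec n b j
      = ee n ((j.val:ℤ) * (b - a)) / ((2*n+1:ℕ):ℂ) := by
  rw [pvec_apply, pvec_apply, map_div₀, ee_conj, Complex.conj_ofReal, div_mul_div_comm, ← ee_add]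
  have harg : -((j.val:ℤ) * a) + (j.val:ℤ)*b = (j.val:ℤ) * (b - a) := by ring
  rw [harg]
  congr 1
  rw [← Complex.ofReal_mul, Real.mul_self_sqrt (by positivity)]
  push_cast; ring

noncomputable def qvec (n : ℕ) (k : ZMod (2*n+1)) : EuclideanSpace ℂ (ZMod (2*n+1)) :=
  WithLp.toLp 2 (pvec n (k.val : ℤ))

lemma qvec_orthonormal (n : ℕ) : Orthonormal ℂ (qvec n) := by
  haveI : NeZero (2*n+1) := ⟨by omega⟩
  rw [orthonormal_iff_ite]
  intro k l
  have hinner : (inner ℂ (qvec n k) (qvec n l) : ℂ) = ∑ j : ZMod (2*n+1),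
      ee n ((j.val:ℤ) * ((l.val:ℤ) - (k.val:ℤ))) / ((2*n+1:ℕ):ℂ) := by
    rw [PiLp.inner_apply]
    refine Finset.sum_congr rfl (fun j _ => ?_)
    rw [RCLike.inner_apply, mul_comm]
    exact conj_pvec_mul n _ _ j
  rw [hinner]
  by_cases hkl : k = l
  · subst hkl
    simp only [sub_self, mul_zero, ee_zero, if_pos rfl]
    rw [Finset.sum_const, Finset.card_univ, ZMod.card, nsmul_eq_mul]
    rw [mul_one_div, div_self (Ncne n), if_pos trivial]
  · rw [if_neg hkl, ← Finset.sum_div]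
    have hm : ¬ ((2*n+1:ℕ):ℤ) ∣ ((l.val:ℤ) - (k.val:ℤ)) := by
      intro hd
      apply hkl
      obtain ⟨t, ht⟩ := hd
      have hlv := ZMod.val_lt l
      have hkv := ZMod.val_lt k
      have ht0 : t = 0 := by
        rcases eq_or_ne t 0 with h | h
        · exact h
        · exfalso
          have h1 : (1:ℤ) ≤ |t| := Int.one_le_abs (by exact_mod_cast h)
          have h2 : |((l.val:ℤ) - (k.val:ℤ))| < ((2*n+1:ℕ):ℤ) := by
            rw [abs_lt]; omega
          rw [ht, abs_mul] at h2
          have h3 : (0:ℤ) < ((2*n+1:ℕ):ℤ) := by positivity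
          nlinarith [abs_nonneg ((2*n+1:ℕ):ℤ), abs_of_pos h3]
      rw [ht0, mul_zero, sub_eq_zero] at ht
      have hv : l.val = k.val := by exact_mod_cast ht
      calc k = ((k.val : ℕ) : ZMod (2*n+1)) := by rw [ZMod.natCast_val, ZMod.cast_id]
        _ = ((l.val : ℕ) : ZMod (2*n+1)) := by rw [hv]
        _ = l := by rw [ZMod.natCast_val, ZMod.cast_id]
    rw [sum_ee_eq_zero n hm, zero_div]


noncomputable def qbasis (n : ℕ) : Module.Basis (ZMod (2*n+1)) ℂ (EuclideanSpace ℂ (ZMod (2*n+1))) :=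
  haveI : NeZero (2*n+1) := ⟨by omega⟩
  haveI : Nonempty (ZMod (2*n+1)) := ⟨0⟩
  basisOfLinearIndependentOfCardEqFinrank (qvec_orthonormal n).linearIndependent
    (by rw [finrank_euclideanSpace])

lemma qbasis_apply (n : ℕ) (k : ZMod (2*n+1)) : qbasis n k = qvec n k := by
  haveI : NeZero (2*n+1) := ⟨by omega⟩
  haveI : Nonempty (ZMod (2*n+1)) := ⟨0⟩
  exact congrFun (coe_basisOfLinearIndependentOfCardEqFinrank _ _) k

lemma eigenvalue_mem (n : ℕ) (μ : ℝ) (v : EuclideanSpace ℂ (ZMod (2*n+1))) (hv : v ≠ 0)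
    (hmv : (ringH n).mulVec v = ((μ:ℝ):ℂ) • v) :
    ∃ k : ZMod (2*n+1), μ = 1 + Real.cos (2*Real.pi*((k.val:ℕ):ℝ)/(2*n+1)) := by
  classical
  set b := qbasis n with hbdef
  set lamc : ZMod (2*n+1) → ℂ :=
    fun k => ((1 + Real.cos (2*Real.pi*(((k.val:ℕ):ℤ):ℝ)/(2*n+1)) : ℝ) : ℂ) with hlamc
  have heig : ∀ k, (ringH n).mulVecLin (b k) = lamc k • b k := by
    intro k
    rw [qbasis_apply]
    exact mulVec_pvec n (k.val : ℤ)
  have happ : (ringH n).mulVec v = ∑ k, (b.repr v k * lamc k) • b k := by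
    calc (ringH n).mulVec v = (ringH n).mulVecLin (WithLp.ofLp (∑ k, b.repr v k • b k)) := by
          rw [b.sum_repr v]; rfl
      _ = ∑ k, b.repr v k • (ringH n).mulVecLin (b k) := by
          rw [WithLp.ofLp_sum, map_sum]
          exact Finset.sum_congr rfl fun k _ => by rw [WithLp.ofLp_smul, map_smul]
      _ = ∑ k, (b.repr v k * lamc k) • b k := by
          rw [WithLp.ofLp_sum]
          refine Finset.sum_congr rfl fun k _ => ?_
          rw [heig k, smul_smul, WithLp.ofLp_smul]
  have h2 : ∑ k, (b.repr v k * lamc k) • b k = ∑ k, (((μ:ℝ):ℂ) * b.repr v k) • b k := by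
    apply WithLp.ofLp_injective 2
    rw [← happ, hmv]
    conv_lhs => rw [← b.sum_repr v]
    simp only [WithLp.ofLp_sum, WithLp.ofLp_smul, Finset.smul_sum, smul_smul]
  have h3 : (fun k => b.repr v k * lamc k) = fun k => ((μ:ℝ):ℂ) * b.repr v k := by
    have hL := b.repr_sum_self (fun k => b.repr v k * lamc k)
    have hR := b.repr_sum_self (fun k => ((μ:ℝ):ℂ) * b.repr v k)
    rw [← hL, ← hR, h2]
  have hc : b.repr v ≠ 0 := fun h => hv ((LinearEquiv.map_eq_zero_iff b.repr).1 h)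
  obtain ⟨k, hk⟩ := Finsupp.ne_iff.1 hc
  have h4 : b.repr v k * lamc k = ((μ:ℝ):ℂ) * b.repr v k := congrFun h3 k
  have h5 : lamc k = ((μ:ℝ):ℂ) := by
    have : lamc k * b.repr v k = ((μ:ℝ):ℂ) * b.repr v k := by
      rw [mul_comm (lamc k)]; simpa using h4
    exact mul_right_cancel₀ (by simpa using hk) this
  refine ⟨k, ?_⟩
  have h6 : (1 + Real.cos (2*Real.pi*(((k.val:ℕ):ℤ):ℝ)/(2*n+1)) : ℝ) = μ :=
    Complex.ofReal_inj.1 h5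
  rw [← h6]
  norm_num

lemma cos_bound_aux (n m : ℕ) (hm : m ≤ n) :
    Real.cos (2*Real.pi*(n:ℝ)/(2*n+1)) ≤ Real.cos (2*Real.pi*(m:ℝ)/(2*n+1)) := by
  have hNpos : (0:ℝ) < 2*(n:ℝ)+1 := by positivity
  have hpi := Real.pi_pos
  apply Real.cos_le_cos_of_nonneg_of_le_pi
  · positivity
  · rw [div_le_iff₀ hNpos]; nlinarith
  · have hm' : (m:ℝ) ≤ n := by exact_mod_cast hm
    gcongr

lemma cos_bound (n m : ℕ) (hm : m < 2*n+1) :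
    Real.cos (2*Real.pi*(n:ℝ)/(2*n+1)) ≤ Real.cos (2*Real.pi*(m:ℝ)/(2*n+1)) := by
  rcases le_or_gt m n with h | h
  · exact cos_bound_aux n m h
  · have key : Real.cos (2*Real.pi*(m:ℝ)/(2*n+1))
        = Real.cos (2*Real.pi*((2*n+1-m:ℕ):ℝ)/(2*n+1)) := by
      rw [← Real.cos_two_pi_sub]
      congr 1
      rw [Nat.cast_sub (le_of_lt hm)]
      have hNpos : (2*(n:ℝ)+1) ≠ 0 := by positivity
      push_cast
      field_simp
    rw [key]
    exact cos_bound_aux n _ (by omega)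


lemma herm_orth (n : ℕ) (hH : (ringH n).IsHermitian)
    (i : ZMod (2*n+1)) (lam : ℝ) (hne : hH.eigenvalues i ≠ lam)
    (v : EuclideanSpace ℂ (ZMod (2*n+1)))
    (hv : (ringH n).mulVec v = ((lam:ℝ):ℂ) • v) :
    (inner ℂ (hH.eigenvectorBasis i) v : ℂ) = 0 := by
  set u : ZMod (2*n+1) → ℂ := ⇑(hH.eigenvectorBasis i) with hu
  set w : ZMod (2*n+1) → ℂ := ⇑v with hw
  have hmu : (ringH n).mulVec u = ((hH.eigenvalues i : ℝ):ℂ) • u := by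
    rw [hu, hH.mulVec_eigenvectorBasis i]
    funext j
    simp [Pi.smul_apply, Complex.real_smul]
  have hinner : (inner ℂ (hH.eigenvectorBasis i) v : ℂ) = dotProduct (star u) w := by
    rw [PiLp.inner_apply]
    refine Finset.sum_congr rfl (fun j _ => ?_)
    rw [RCLike.inner_apply, mul_comm]
    rfl
  have d1 : dotProduct (star u) ((ringH n).mulVec w)
      = ((lam:ℝ):ℂ) * dotProduct (star u) w := by
    have hv' : (ringH n).mulVec w = ((lam:ℝ):ℂ) • w := hv
    rw [hv']
    exact dotProduct_smul _ _ _
  have d2 : dotProduct (star u) ((ringH n).mulVec w)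
      = ((hH.eigenvalues i : ℝ):ℂ) * dotProduct (star u) w := by
    rw [Matrix.dotProduct_mulVec]
    have hs : star ((ringH n).mulVec u) = Matrix.vecMul (star u) (ringH n) := by
      rw [Matrix.star_mulVec, hH.eq]
    rw [← hs, hmu, star_smul]
    have hstar : (star (((hH.eigenvalues i : ℝ):ℂ)) : ℂ) = ((hH.eigenvalues i : ℝ):ℂ) := by
      rw [Complex.star_def, Complex.conj_ofReal]
    rw [hstar]
    exact smul_dotProduct _ _ _
  have key : (((hH.eigenvalues i : ℝ):ℂ) - ((lam:ℝ):ℂ)) * dotProduct (star u) w = 0 := by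
    linear_combination d1 - d2
  rcases mul_eq_zero.1 key with h | h
  · exfalso
    apply hne
    have h9 : ((hH.eigenvalues i : ℝ):ℂ) = ((lam:ℝ):ℂ) := by linear_combination h
    exact_mod_cast h9
  · rw [hinner, h]


lemma mulVec_pvec_n (n : ℕ) :
    (ringH n).mulVec (pvec n (n:ℤ)) =
      ((1 + Real.cos (2 * Real.pi * (n:ℝ) / (2 * n + 1)) : ℝ) : ℂ) • pvec n (n:ℤ) := by
  have h := mulVec_pvec n (n:ℤ)
  have e : 2 * Real.pi * (((n:ℕ):ℤ):ℝ) / (2 * (n:ℝ) + 1)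
      = 2 * Real.pi * (n:ℝ) / (2 * (n:ℝ) + 1) := by push_cast; ring
  rw [e] at h
  exact h

lemma mulVec_pvec_negn (n : ℕ) :
    (ringH n).mulVec (pvec n (-(n:ℤ))) =
      ((1 + Real.cos (2 * Real.pi * (n:ℝ) / (2 * n + 1)) : ℝ) : ℂ) • pvec n (-(n:ℤ)) := by
  have h := mulVec_pvec n (-(n:ℤ))
  have e : 2 * Real.pi * ((-(n:ℤ)):ℝ) / (2 * (n:ℝ) + 1)
      = -(2 * Real.pi * (n:ℝ) / (2 * (n:ℝ) + 1)) := by push_cast; ring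
  rw [Int.cast_neg] at h
  rw [e, Real.cos_neg] at h
  exact h

lemma pvec_at_zero (n : ℕ) (k : ℤ) : pvec n k 0 = 1 / (Real.sqrt (2*n+1) : ℂ) := by
  haveI : NeZero (2*n+1) := ⟨by omega⟩
  rw [pvec_apply, ZMod.val_zero]
  have e : (((0:ℕ):ℤ)) * k = 0 := by ring
  rw [e, ee_zero]

lemma pvec_at_one (n : ℕ) (hn : 1 ≤ n) (k : ℤ) :
    pvec n k 1 = ee n k / (Real.sqrt (2*n+1) : ℂ) := by
  haveI : Fact (1 < 2*n+1) := ⟨by omega⟩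
  rw [pvec_apply, ZMod.val_one]
  have e : (((1:ℕ):ℤ)) * k = k := by ring
  rw [e]

lemma two_eigen (n : ℕ) (hn : 1 ≤ n) (hH : (ringH n).IsHermitian) :
    ∃ i j : ZMod (2*n+1), i ≠ j ∧
      hH.eigenvalues i = 1 + Real.cos (2*Real.pi*(n:ℝ)/(2*n+1)) ∧
      hH.eigenvalues j = 1 + Real.cos (2*Real.pi*(n:ℝ)/(2*n+1)) := by
  classical
  haveI : NeZero (2*n+1) := ⟨by omega⟩
  by_contra hcon
  push_neg at hcon
  set lam := 1 + Real.cos (2*Real.pi*(n:ℝ)/(2*n+1)) with hlam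
  set v₁ : EuclideanSpace ℂ (ZMod (2*n+1)) := WithLp.toLp 2 (pvec n (n:ℤ) : ZMod (2*n+1) → ℂ) with hv₁def
  set v₂ : EuclideanSpace ℂ (ZMod (2*n+1)) := WithLp.toLp 2 (pvec n (-(n:ℤ)) : ZMod (2*n+1) → ℂ) with hv₂def
  have hv₁ : (ringH n).mulVec v₁ = ((lam:ℝ):ℂ) • v₁ := mulVec_pvec_n n
  have hv₂ : (ringH n).mulVec v₂ = ((lam:ℝ):ℂ) • v₂ := mulVec_pvec_negn n
  set B := hH.eigenvectorBasis with hB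
  have hs0 : ((Real.sqrt (2*n+1) : ℝ) : ℂ) ≠ 0 := by
    rw [Complex.ofReal_ne_zero]
    positivity
  have hv₁0 : v₁ 0 = 1 / (Real.sqrt (2*n+1) : ℂ) := pvec_at_zero n (n:ℤ)
  have hv₂0 : v₂ 0 = 1 / (Real.sqrt (2*n+1) : ℂ) := pvec_at_zero n (-(n:ℤ))
  have hv₁1 : v₁ 1 = ee n (n:ℤ) / (Real.sqrt (2*n+1) : ℂ) := pvec_at_one n hn (n:ℤ)
  have hv₂1 : v₂ 1 = ee n (-(n:ℤ)) / (Real.sqrt (2*n+1) : ℂ) := pvec_at_one n hn (-(n:ℤ))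
  by_cases hex : ∃ i₀, hH.eigenvalues i₀ = lam
  · obtain ⟨i₀, hi₀⟩ := hex
    have huniq : ∀ i, i ≠ i₀ → hH.eigenvalues i ≠ lam := by
      intro i hne heq
      exact hcon i i₀ hne heq hi₀
    have hexp : ∀ (v : EuclideanSpace ℂ (ZMod (2*n+1))),
        (ringH n).mulVec v = ((lam:ℝ):ℂ) • v →
        v = (inner ℂ (B i₀) v : ℂ) • B i₀ := by
      intro v hv
      have h1 := B.sum_repr' v
      rw [Finset.sum_eq_single i₀] at h1
      · exact h1.symm
      · intro i _ hne
        rw [herm_orth n hH i lam (huniq i hne) v hv, zero_smul]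
      · intro h; exact absurd (Finset.mem_univ i₀) h
    have e₁ := hexp v₁ hv₁
    have e₂ := hexp v₂ hv₂
    set c₁ : ℂ := (inner ℂ (B i₀) v₁ : ℂ) with hc₁def
    set c₂ : ℂ := (inner ℂ (B i₀) v₂ : ℂ) with hc₂def
    have a0 : v₁ 0 = c₁ * B i₀ 0 := by
      conv_lhs => rw [e₁]
      simp [PiLp.smul_apply, smul_eq_mul]
    have b0 : v₂ 0 = c₂ * B i₀ 0 := by
      conv_lhs => rw [e₂]
      simp [PiLp.smul_apply, smul_eq_mul]
    have a1 : v₁ 1 = c₁ * B i₀ 1 := by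
      conv_lhs => rw [e₁]
      simp [PiLp.smul_apply, smul_eq_mul]
    have b1 : v₂ 1 = c₂ * B i₀ 1 := by
      conv_lhs => rw [e₂]
      simp [PiLp.smul_apply, smul_eq_mul]
    have hB0 : B i₀ 0 ≠ 0 := by
      intro h
      rw [h, mul_zero] at a0
      rw [hv₁0] at a0
      exact (div_ne_zero one_ne_zero hs0) a0
    have hcc : c₁ = c₂ := by
      apply mul_right_cancel₀ hB0
      rw [← a0, ← b0, hv₁0, hv₂0]
    have h9 : ee n (n:ℤ) = ee n (-(n:ℤ)) := by
      have h8 : ee n (n:ℤ) / ((Real.sqrt (2*n+1):ℝ):ℂ) = ee n (-(n:ℤ)) / ((Real.sqrt (2*n+1):ℝ):ℂ) := by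
        rw [← hv₁1, ← hv₂1, a1, b1, hcc]
      field_simp at h8
      exact h8
    have h10 : ee n ((n:ℤ) + (n:ℤ)) = 1 := by
      rw [ee_add]
      nth_rewrite 1 [h9]
      rw [← ee_add]
      have e0 : -(n:ℤ) + (n:ℤ) = 0 := by ring
      rw [e0, ee_zero]
    have hdvd := (ee_eq_one_iff n _).1 h10
    have hle := Int.le_of_dvd (by exact_mod_cast (by omega : 0 < n + n)) hdvd
    push_cast at hle
    omega
  · push_neg at hex
    have hzero : v₁ = 0 := by
      have h1 := B.sum_repr' v₁
      rw [Finset.sum_eq_zero] at h1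
      · exact h1.symm
      · intro i _
        rw [herm_orth n hH i lam (hex i) v₁ hv₁, zero_smul]
    have h2 : v₁ 0 = 0 := by rw [hzero]; rfl
    rw [hv₁0] at h2
    exact (div_ne_zero one_ne_zero hs0) h2

end Stmt18

open Stmt18

/-- The counterexample of Section 6: the smallest eigenvalue `1 + cos(2πn/(2n+1))` of
`H₀` has multiplicity at least two (both `p_n` and `p_{-n}` are eigenvectors for it), so
the spectral gap is zero, yet every `S` with `0 < |S| ≤ n` has conductance ratio at
least `|cos(2πn/(2n+1))|/n` for `ψ = p_n`. -/
theorem stmt_18 (n : ℕ) (hn : 1 ≤ n) (hH : (ringH n).IsHermitian) :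
    -- `p_n` and `p_{-n}` are both eigenvectors with eigenvalue `1 + cos(2πn/(2n+1))`:
    (ringH n).mulVec (pvec n n) =
      ((1 + Real.cos (2 * Real.pi * (n : ℝ) / (2 * n + 1)) : ℝ) : ℂ) • pvec n n ∧
    (ringH n).mulVec (pvec n (-n)) =
      ((1 + Real.cos (2 * Real.pi * (n : ℝ) / (2 * n + 1)) : ℝ) : ℂ) • pvec n (-n) ∧
    -- the two smallest eigenvalues both equal it, so the spectral gap is zero:
    (∀ E : ℕ → ℝ, Monotone E →
      (∃ σ : Fin (Fintype.card (ZMod (2 * n + 1))) ≃ ZMod (2 * n + 1),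
        ∀ i, E i = hH.eigenvalues (σ i)) →
      E 0 = 1 + Real.cos (2 * Real.pi * (n : ℝ) / (2 * n + 1)) ∧
      E 1 = 1 + Real.cos (2 * Real.pi * (n : ℝ) / (2 * n + 1))) ∧
    -- yet the conductance of every small set is at least `|cos(2πn/(2n+1))|/n`:
    (∀ S : Finset (ZMod (2 * n + 1)), 0 < S.card → S.card ≤ n →
      |Real.cos (2 * Real.pi * (n : ℝ) / (2 * n + 1))| / n ≤
        (-(∑ x ∈ S, ∑ y ∈ Sᶜ, (starRingEnd ℂ) (pvec n n x) * ringH n x y * pvec n n y).re) /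
          (∑ z ∈ S, ‖pvec n n z‖ ^ 2)) := by
  refine ⟨mulVec_pvec_n n, mulVec_pvec_negn n, ?_, fun S h0 h1 => conductance n hn S h0 h1⟩
  intro E hE hs
  obtain ⟨σ, hσ⟩ := hs
  haveI : NeZero (2*n+1) := ⟨by omega⟩
  have hcard : 0 < Fintype.card (ZMod (2*n+1)) := Fintype.card_pos
  set lam := 1 + Real.cos (2 * Real.pi * (n:ℝ) / (2 * n + 1)) with hlam
  have hlow : ∀ i : ZMod (2*n+1), lam ≤ hH.eigenvalues i := by
    intro i
    have hvne : (hH.eigenvectorBasis i : EuclideanSpace ℂ (ZMod (2*n+1))) ≠ 0 :=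
      hH.eigenvectorBasis.orthonormal.ne_zero i
    have hmv : (ringH n).mulVec ⇑(hH.eigenvectorBasis i)
        = ((hH.eigenvalues i : ℝ):ℂ) • ⇑(hH.eigenvectorBasis i) := by
      rw [hH.mulVec_eigenvectorBasis i]
      funext j
      simp [Complex.real_smul]
    obtain ⟨k, hk⟩ := eigenvalue_mem n (hH.eigenvalues i) (hH.eigenvectorBasis i) hvne hmv
    rw [hk, hlam]
    have hcb := cos_bound n k.val (ZMod.val_lt k)
    linarith
  have hE0low : lam ≤ E 0 := by
    rw [hσ 0]
    exact hlow _
  obtain ⟨i, j, hij, hi, hj⟩ := two_eigen n hn hH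
  have hEa : E ((σ.symm i : Fin (Fintype.card (ZMod (2*n+1)))) : ℕ) = lam := by
    rw [hσ, Fin.cast_val_eq_self, Equiv.apply_symm_apply]
    exact hi
  have hEb : E ((σ.symm j : Fin (Fintype.card (ZMod (2*n+1)))) : ℕ) = lam := by
    rw [hσ, Fin.cast_val_eq_self, Equiv.apply_symm_apply]
    exact hj
  have hab : ((σ.symm i : Fin (Fintype.card (ZMod (2*n+1)))) : ℕ)
      ≠ ((σ.symm j : Fin (Fintype.card (ZMod (2*n+1)))) : ℕ) := by
    intro h
    apply hij
    have h2 : σ.symm i = σ.symm j := Fin.ext h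
    have h3 := congrArg σ h2
    rwa [Equiv.apply_symm_apply, Equiv.apply_symm_apply] at h3
  have hupper : E 1 ≤ lam := by
    rcases le_or_gt 1 ((σ.symm i : Fin (Fintype.card (ZMod (2*n+1)))) : ℕ) with h | h
    · rw [← hEa]; exact hE h
    · have hb1 : 1 ≤ ((σ.symm j : Fin (Fintype.card (ZMod (2*n+1)))) : ℕ) := by omega
      rw [← hEb]; exact hE hb1
  have hE01 : E 0 ≤ E 1 := hE (by norm_num)
  exact ⟨le_antisymm (le_trans hE01 hupper) hE0low,
    le_antisymm hupper (le_trans hE0low hE01)⟩
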